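/- Let M be a matroid on ground set E and let S₁, …, S_k ⊆ E be a sequence of sets with S_i ⊆ E \ span(S₁ ∪ ⋯ ∪ S_{i−1}) for each i. Then for any independent set T ∈ I, the set T ∩ span(S₁ ∪ ⋯ ∪ S_k) can be partitioned into sets T₁, …, T_k such that for each i, T_i ⊆ E \ span(S₁ ∪ ⋯ ∪ S_{i−1}) and |T_i| ≤ rank(S₁ ∪ ⋯ ∪ S_i) − rank(S₁ ∪ ⋯ ∪ S_{i−1}) ≤ |S_i|. -/
import Mathlib


open scoped Classical
open Finset

/-- A matroid on a finite ground set `E`: a nonempty downward-closed family of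
independent sets satisfying the exchange (augmentation) property. -/
structure FinMatroid (E : Type*) [DecidableEq E] [Fintype E] where
  Indep : Finset E → Prop
  empty_indep : Indep ∅
  subset_indep : ∀ ⦃S T : Finset E⦄, S ⊆ T → Indep T → Indep S
  exchange : ∀ ⦃S T : Finset E⦄, Indep S → Indep T → S.card < T.card →
      ∃ e ∈ T \ S, Indep (insert e S)

variable {E : Type*} [DecidableEq E] [Fintype E]

/-- The rank of a set `S`: the (common, maximal) cardinality of maximal
independent subsets of `S`. -/
noncomputable def FinMatroid.rank (M : FinMatroid E) (S : Finset E) : ℕ :=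
  (S.powerset.filter (fun I => M.Indep I)).sup Finset.card

/-- The span of a set `S`: the elements that do not increase the rank of `S`. -/
noncomputable def FinMatroid.span (M : FinMatroid E) (S : Finset E) : Finset E :=
  Finset.univ.filter (fun e => M.rank (insert e S) = M.rank S)

namespace FinMatroid

variable (M : FinMatroid E)

lemma indep_card_le_rank {X A : Finset E} (hX : M.Indep X) (hXA : X ⊆ A) :
    X.card ≤ M.rank A :=
  Finset.le_sup (by simp [Finset.mem_filter, Finset.mem_powerset, hXA, hX])

lemma exists_basis (A : Finset E) : ∃ B, B ⊆ A ∧ M.Indep B ∧ B.card = M.rank A := by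
  obtain ⟨B, hB, hBc⟩ := Finset.exists_mem_eq_sup (A.powerset.filter (fun I => M.Indep I))
    ⟨∅, by simp [M.empty_indep]⟩ Finset.card
  simp only [Finset.mem_filter, Finset.mem_powerset] at hB
  exact ⟨B, hB.1, hB.2, hBc.symm⟩

lemma rank_mono {A B : Finset E} (h : A ⊆ B) : M.rank A ≤ M.rank B := by
  obtain ⟨C, hCA, hCi, hCc⟩ := M.exists_basis A
  rw [← hCc]
  exact M.indep_card_le_rank hCi (hCA.trans h)

lemma rank_empty : M.rank ∅ = 0 := by
  obtain ⟨B, hB, _, hc⟩ := M.exists_basis ∅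
  rw [← hc]
  simpa using Finset.card_le_card hB

lemma mem_span {A : Finset E} {e : E} :
    e ∈ M.span A ↔ M.rank (insert e A) = M.rank A := by
  simp [FinMatroid.span]

lemma subset_span (A : Finset E) : A ⊆ M.span A := by
  intro a ha
  rw [M.mem_span, Finset.insert_eq_self.2 ha]

lemma rank_span (A : Finset E) : M.rank (M.span A) = M.rank A := by
  refine le_antisymm ?_ (M.rank_mono (M.subset_span A))
  obtain ⟨J, hJs, hJi, hJc⟩ := M.exists_basis (M.span A)
  obtain ⟨B, hBs, hBi, hBc⟩ := M.exists_basis A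
  rw [← hJc]
  by_contra h
  push_neg at h
  have hBJ : B.card < J.card := by omega
  obtain ⟨e, he, hei⟩ := M.exchange hBi hJi hBJ
  rw [Finset.mem_sdiff] at he
  have hespan : M.rank (insert e A) = M.rank A := (M.mem_span).1 (hJs he.1)
  have hcard : B.card + 1 ≤ M.rank (insert e A) := by
    have := M.indep_card_le_rank hei (Finset.insert_subset_insert e hBs)
    rwa [Finset.card_insert_of_notMem he.2] at this
  omega

lemma rank_union_le (A B : Finset E) : M.rank (A ∪ B) ≤ M.rank A + B.card := by
  obtain ⟨J, hJs, hJi, hJc⟩ := M.exists_basis (A ∪ B)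
  rw [← hJc]
  have h1 : (J ∩ A).card ≤ M.rank A :=
    M.indep_card_le_rank (M.subset_indep Finset.inter_subset_left hJi)
      Finset.inter_subset_right
  have h2 : (J \ A).card ≤ B.card := by
    refine Finset.card_le_card (fun x hx => ?_)
    rw [Finset.mem_sdiff] at hx
    rcases Finset.mem_union.1 (hJs hx.1) with h | h
    · exact absurd h hx.2
    · exact h
  have h3 := Finset.card_inter_add_card_sdiff J A
  omega

/-- Pure combinatorial partition lemma: if for every `j ≤ k` the part of `T`
inside the forbidden set `P j` fits in the total capacity of the first `j`
blocks, and `T` fits in the total capacity, then `T` can be partitioned into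
blocks `T' i` avoiding `P i` with `|T' i| ≤ c i`. -/
lemma partition_of_capacities {α : Type*} [DecidableEq α] (P : ℕ → Finset α) (c : ℕ → ℕ) :
    ∀ (k : ℕ) (T : Finset α),
      (∀ j ≤ k, (T ∩ P j).card ≤ ∑ i ∈ Finset.range j, c i) →
      T.card ≤ ∑ i ∈ Finset.range k, c i →
      ∃ T' : ℕ → Finset α,
        (∀ i < k, ∀ j < k, i ≠ j → Disjoint (T' i) (T' j)) ∧
        (Finset.range k).biUnion T' = T ∧
        (∀ i < k, Disjoint (T' i) (P i)) ∧
        (∀ i < k, (T' i).card ≤ c i) := by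
  intro k
  induction k with
  | zero =>
    intro T _ hTot
    simp only [Finset.range_zero, Finset.sum_empty, Nat.le_zero, Finset.card_eq_zero] at hTot
    exact ⟨fun _ => ∅, by simp, by simp [hTot], by simp, by simp⟩
  | succ k ih =>
    intro T hH hTot
    set X := T \ P k with hX
    obtain ⟨Y, hYX, hYc⟩ := Finset.exists_subset_card_eq
      (min_le_left X.card (c k))
    have hYT : Y ⊆ T := hYX.trans (Finset.sdiff_subset)
    set R := T \ Y with hR
    have hRH : ∀ j ≤ k, (R ∩ P j).card ≤ ∑ i ∈ Finset.range j, c i := by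
      intro j hj
      refine le_trans (Finset.card_le_card
        (Finset.inter_subset_inter (Finset.sdiff_subset) (le_refl (P j)))) ?_
      exact hH j (hj.trans (Nat.le_succ k))
    have hRTot : R.card ≤ ∑ i ∈ Finset.range k, c i := by
      rcases le_or_gt X.card (c k) with hle | hlt
      · have hYeq : Y = X := Finset.eq_of_subset_of_card_le hYX
          (by rw [hYc, min_eq_left hle])
        have hReq : R = T ∩ P k := by
          rw [hR, hYeq, hX, Finset.sdiff_sdiff_self_left]
        rw [hReq]
        exact hH k (Nat.le_succ k)
      · have hYc' : Y.card = c k := by rw [hYc, min_eq_right hlt.le]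
        have hRc : R.card = T.card - Y.card := Finset.card_sdiff_of_subset hYT
        rw [Finset.sum_range_succ] at hTot
        omega
    obtain ⟨T'', hd, hu, hp, hc'⟩ := ih R hRH hRTot
    have hT''sub : ∀ i < k, T'' i ⊆ R := by
      intro i hi
      rw [← hu]
      exact Finset.subset_biUnion_of_mem T'' (Finset.mem_range.2 hi)
    have hYdisj : ∀ i < k, Disjoint Y (T'' i) := by
      intro i hi
      exact Finset.disjoint_right.2 fun a ha hay =>
        (Finset.mem_sdiff.1 (hT''sub i hi ha)).2 hay
    refine ⟨fun i => if i = k then Y else T'' i, ?_, ?_, ?_, ?_⟩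
    · intro i hi j hj hij
      rcases eq_or_lt_of_le (Nat.lt_succ_iff.1 hi) with hik | hik
      · subst hik
        have hjk : j ≠ i := fun h => hij h.symm
        have hj' : j < i := lt_of_le_of_ne (Nat.lt_succ_iff.1 hj) hjk
        simp only [if_pos rfl, if_neg hjk]
        exact hYdisj j hj'
      · rcases eq_or_lt_of_le (Nat.lt_succ_iff.1 hj) with hjk | hjk
        · subst hjk
          simp only [if_neg (Nat.ne_of_lt hik), if_pos rfl]
          exact (hYdisj i hik).symm
        · simp only [if_neg (Nat.ne_of_lt hik), if_neg (Nat.ne_of_lt hjk)]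
          exact hd i hik j hjk hij
    · rw [Finset.range_add_one, Finset.biUnion_insert, if_pos rfl]
      have : (Finset.range k).biUnion (fun i => if i = k then Y else T'' i)
          = (Finset.range k).biUnion T'' := by
        refine Finset.biUnion_congr rfl (fun i hi => ?_)
        rw [if_neg (Nat.ne_of_lt (Finset.mem_range.1 hi))]
      rw [this, hu, hR, Finset.union_sdiff_of_subset hYT]
    · intro i hi
      show Disjoint (if i = k then Y else T'' i) (P i)
      rcases eq_or_lt_of_le (Nat.lt_succ_iff.1 hi) with hik | hik
      · subst hik
        rw [if_pos rfl]
        exact Finset.disjoint_right.2 fun a hap hay =>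
          (Finset.mem_sdiff.1 (hYX hay)).2 hap
      · rw [if_neg (Nat.ne_of_lt hik)]
        exact hp i hik
    · intro i hi
      show (if i = k then Y else T'' i).card ≤ c i
      rcases eq_or_lt_of_le (Nat.lt_succ_iff.1 hi) with hik | hik
      · subst hik
        rw [if_pos rfl, hYc]
        exact min_le_right _ _
      · rw [if_neg (Nat.ne_of_lt hik)]
        exact hc' i hik

end FinMatroid

/-- given sets `S 0, …, S (k-1)` with each `S i` disjoint from the
span of the union of the previous ones, any independent set `T` has its part
inside `span(S 0 ∪ ⋯ ∪ S (k-1))` partitioned into sets `T' 0, …, T' (k-1)` with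
`T' i` outside the span of the first `i` blocks and
`|T' i| ≤ rank(U (i+1)) − rank(U i) ≤ |S i|`, where `U i = S 0 ∪ ⋯ ∪ S (i-1)`. -/
theorem brualdi_partition_span (M : FinMatroid E) (k : ℕ) (S : ℕ → Finset E)
    (hS : ∀ i < k, S i ⊆ Finset.univ \ M.span ((Finset.range i).biUnion S))
    (T : Finset E) (hT : M.Indep T) :
    ∃ T' : ℕ → Finset E,
      (∀ i < k, ∀ j < k, i ≠ j → Disjoint (T' i) (T' j)) ∧
      ((Finset.range k).biUnion T' = T ∩ M.span ((Finset.range k).biUnion S)) ∧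
      (∀ i < k, T' i ⊆ Finset.univ \ M.span ((Finset.range i).biUnion S)) ∧
      (∀ i < k,
        (T' i).card ≤
          M.rank ((Finset.range (i + 1)).biUnion S) -
            M.rank ((Finset.range i).biUnion S) ∧
        M.rank ((Finset.range (i + 1)).biUnion S) -
            M.rank ((Finset.range i).biUnion S) ≤ (S i).card) := by
  classical
  set U : ℕ → Finset E := fun j => (Finset.range j).biUnion S with hU
  set c : ℕ → ℕ := fun i => M.rank (U (i + 1)) - M.rank (U i) with hc
  have hUmono : ∀ j, U j ⊆ U (j + 1) := fun j =>
    Finset.biUnion_subset_biUnion_of_subset_left S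
      (Finset.range_subset_range.2 (Nat.le_succ j))
  have hrmono : ∀ j, M.rank (U j) ≤ M.rank (U (j + 1)) := fun j =>
    M.rank_mono (hUmono j)
  have hU0 : M.rank (U 0) = 0 := by
    simp only [hU, Finset.range_zero, Finset.biUnion_empty]
    exact M.rank_empty
  have hsum : ∀ j, ∑ i ∈ Finset.range j, c i = M.rank (U j) := by
    intro j
    induction j with
    | zero => simp [hU0]
    | succ j ihj =>
      rw [Finset.sum_range_succ, ihj]
      simp only [hc]
      have := hrmono j
      omega
  set T₀ : Finset E := T ∩ M.span (U k) with hT₀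
  have hT₀indep : M.Indep T₀ := M.subset_indep Finset.inter_subset_left hT
  have hbound : ∀ j, (T₀ ∩ M.span (U j)).card ≤ M.rank (U j) := by
    intro j
    have h1 : M.Indep (T₀ ∩ M.span (U j)) :=
      M.subset_indep Finset.inter_subset_left hT₀indep
    calc (T₀ ∩ M.span (U j)).card ≤ M.rank (M.span (U j)) :=
          M.indep_card_le_rank h1 Finset.inter_subset_right
      _ = M.rank (U j) := M.rank_span (U j)
  obtain ⟨T', hdisj, hunion, havoid, hcard⟩ :=
    FinMatroid.partition_of_capacities (fun i => M.span (U i)) c k T₀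
      (fun j _ => by rw [hsum j]; exact hbound j)
      (by
        rw [hsum k]
        have : T₀ ∩ M.span (U k) = T₀ := Finset.inter_eq_left.2
          (by rw [hT₀]; exact Finset.inter_subset_right)
        calc T₀.card = (T₀ ∩ M.span (U k)).card := by rw [this]
          _ ≤ M.rank (U k) := hbound k)
  refine ⟨T', hdisj, hunion, ?_, ?_⟩
  · intro i hi
    exact Finset.subset_sdiff.2 ⟨Finset.subset_univ _, havoid i hi⟩
  · intro i hi
    have hsplit : U (i + 1) = U i ∪ S i := by
      simp only [hU]
      simp only [Finset.range_add_one, Finset.biUnion_insert]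
      exact Finset.union_comm _ _
    have h2 : M.rank (U (i + 1)) - M.rank (U i) ≤ (S i).card := by
      have := M.rank_union_le (U i) (S i)
      rw [← hsplit] at this
      omega
    exact ⟨hcard i hi, h2⟩
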